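/- (Covariance matrix identity for weighted degrees.) Let D_Z̃ and D_d be the m×m diagonal matrices with diagonal entries Z̃_i and d_i respectively. Then E[D_Z̃ · X·Xᵀ · D_Z̃] = p·(1−p)·( (1/n)·D_d·X·Xᵀ·D_d + (1/σ)·(I − D_d/n)·D_d² ), where the expectation is taken entrywise. -/

import Mathlib

open MeasureTheory ProbabilityTheory Matrix Finset

/-- **Covariance matrix identity for weighted degrees.**
`E[D_Z̃ · X Xᵀ · D_Z̃] = p (1−p) ((1/n) D_d X Xᵀ D_d + (1/σ)(I − D_d/n) D_d²)` entrywise. -/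
theorem sgc_covariance_identity
    (m n l : ℕ) (hn : 1 ≤ n)
    (S : Fin n → Finset (Fin m)) (d : Fin m → ℕ)
    (hdpos : ∀ i, 0 < d i)
    (hdeg : ∀ i : Fin m, (Finset.univ.filter (fun j => i ∈ S j)).card = d i)
    (hpair : ∀ i i' : Fin m, i ≠ i' →
      (Finset.univ.filter (fun j => i ∈ S j ∧ i' ∈ S j)).card * n = d i * d i')
    (p : ℝ) (hp0 : 0 ≤ p) (hp1 : p < 1)
    (Ω : Type*) [MeasureSpace Ω] [IsProbabilityMeasure (ℙ : Measure Ω)]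
    (B : Fin n → Ω → ℝ)
    (hB01 : ∀ j ω, B j ω = 0 ∨ B j ω = 1)
    (hBmeas : ∀ j, Measurable (B j))
    (hBp : ∀ j, (ℙ : Measure Ω) {ω | B j ω = 1} = ENNReal.ofReal (1 - p))
    (hBindep : iIndepFun B ℙ)
    (Z : Fin m → Ω → ℝ)
    (hZ : ∀ i ω, Z i ω = ∑ j, if i ∈ S j then B j ω else 0)
    (Zt : Fin m → Ω → ℝ)
    (hZt : ∀ i ω, Zt i ω = Z i ω - (d i : ℝ) * (1 - p))
    (X : Matrix (Fin m) (Fin l) ℝ)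
    (σ dbar : ℝ)
    (hdbar : dbar = (∑ i, (d i : ℝ)) / m)
    (hσ : σ = n * dbar / (∑ i, ∑ k, X i k ^ 2))
    (hw : ∀ i, (d i : ℝ) = σ * ∑ k, X i k ^ 2)
    (Dd Mrhs : Matrix (Fin m) (Fin m) ℝ)
    (hDd : Dd = Matrix.diagonal (fun i => (d i : ℝ)))
    (hMrhs : Mrhs = (p * (1 - p)) •
      ((1 / (n : ℝ)) • (Dd * (X * Xᵀ) * Dd) +
        (1 / σ) • ((1 - (1 / (n : ℝ)) • Dd) * (Dd * Dd)))) :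
    ∀ a b : Fin m,
      (∫ ω, (Matrix.diagonal (fun i => Zt i ω) * (X * Xᵀ) *
          Matrix.diagonal (fun i => Zt i ω)) a b) = Mrhs a b := by
  intro a b
  have hq0 : (0:ℝ) ≤ 1 - p := by linarith
  have hq1 : (1:ℝ) - p ≤ 1 := by linarith
  set Y : Fin n → Ω → ℝ := fun j ω => B j ω - (1 - p) with hYdef
  -- basic measurability / integrability
  have hYmeas : ∀ j, Measurable (Y j) := fun j => (hBmeas j).sub measurable_const
  have hBint : ∀ j, Integrable (B j) ℙ := by
    intro j
    refine (integrable_const (1:ℝ)).mono' (hBmeas j).aestronglyMeasurable ?_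
    refine Filter.Eventually.of_forall fun ω => ?_
    rcases hB01 j ω with h | h <;> simp [h]
  have hYint : ∀ j, Integrable (Y j) ℙ := fun j => (hBint j).sub (integrable_const _)
  have hYabs : ∀ j ω, |Y j ω| ≤ 1 := by
    intro j ω
    rcases hB01 j ω with h | h <;>
      · simp only [hYdef, h]
        rw [abs_le]; constructor <;> linarith
  -- mean of B
  have hBE : ∀ j, ∫ ω, B j ω = 1 - p := by
    intro j
    have hset : MeasurableSet {ω | B j ω = 1} := (hBmeas j) (measurableSet_singleton 1)
    have hrep : (fun ω => B j ω) = Set.indicator {ω | B j ω = 1} (fun _ => (1:ℝ)) := by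
      funext ω
      rcases hB01 j ω with h | h <;> simp [Set.indicator_apply, h]
    rw [hrep, integral_indicator_const _ hset, measureReal_def, hBp j, smul_eq_mul, mul_one,
      ENNReal.toReal_ofReal hq0]
  have hYE : ∀ j, ∫ ω, Y j ω = 0 := by
    intro j
    simp only [hYdef]
    rw [integral_sub (hBint j) (integrable_const _), hBE j, integral_const]
    simp
  have hBsq : ∀ j ω, B j ω * B j ω = B j ω := by
    intro j ω; rcases hB01 j ω with h | h <;> simp [h]
  have hYsqE : ∀ j, ∫ ω, Y j ω * Y j ω = p * (1 - p) := by
    intro j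
    have hrep : (fun ω => Y j ω * Y j ω)
        = fun ω => (1 - 2 * (1 - p)) * B j ω + (1 - p) ^ 2 := by
      funext ω
      simp only [hYdef]
      linear_combination hBsq j ω
    rw [hrep, integral_add ((hBint j).const_mul _) (integrable_const _),
      integral_const_mul, hBE j, integral_const]
    simp only [measureReal_def, measure_univ, ENNReal.toReal_one, one_smul, smul_eq_mul]
    ring
  have hYYE : ∀ j j', j ≠ j' → ∫ ω, Y j ω * Y j' ω = 0 := by
    intro j j' hjj
    have hind : IndepFun (Y j) (Y j') ℙ :=
      (hBindep.indepFun hjj).comp (measurable_id.sub measurable_const)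
        (measurable_id.sub measurable_const)
    have h2 : (fun ω => Y j ω * Y j' ω) = Y j * Y j' := rfl
    calc ∫ ω, Y j ω * Y j' ω = ∫ ω, (Y j * Y j') ω := by rw [h2]
    _ = (∫ ω, Y j ω) * ∫ ω, Y j' ω :=
        hind.integral_mul_eq_mul_integral (hYmeas j).aestronglyMeasurable (hYmeas j').aestronglyMeasurable
    _ = 0 := by rw [hYE j, hYE j', mul_zero]
  -- representation of Zt
  have hZtY : ∀ i ω, Zt i ω = ∑ j, (if i ∈ S j then Y j ω else 0) := by
    intro i ω
    rw [hZt, hZ]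
    have hc : (d i : ℝ) * (1 - p) = ∑ j, (if i ∈ S j then (1 - p) else 0) := by
      rw [← Finset.sum_filter, Finset.sum_const, hdeg i, nsmul_eq_mul]
    rw [hc, ← Finset.sum_sub_distrib]
    refine Finset.sum_congr rfl fun j _ => ?_
    by_cases h : i ∈ S j <;> simp [h, hYdef]
  -- integrability of the cross terms
  have hint : ∀ j j' : Fin n, Integrable
      (fun ω => (if a ∈ S j then Y j ω else 0) * (if b ∈ S j' then Y j' ω else 0)) ℙ := by
    intro j j'
    refine (integrable_const (1:ℝ)).mono' ?_ ?_
    · apply Measurable.aestronglyMeasurable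
      apply Measurable.mul
      · by_cases h : a ∈ S j <;> simp [h, hYmeas j]
      · by_cases h : b ∈ S j' <;> simp [h, hYmeas j']
    · refine Filter.Eventually.of_forall fun ω => ?_
      by_cases h1 : a ∈ S j <;> by_cases h2 : b ∈ S j' <;>
        simp [h1, h2, abs_mul]
      exact mul_le_one₀ (hYabs j ω) (abs_nonneg _) (hYabs j' ω)
  -- value of each cross term
  have hterm : ∀ j j' : Fin n,
      ∫ ω, (if a ∈ S j then Y j ω else 0) * (if b ∈ S j' then Y j' ω else 0)
        = if j = j' then (if a ∈ S j ∧ b ∈ S j then p * (1 - p) else 0) else 0 := by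
    intro j j'
    by_cases hjj : j = j'
    · subst hjj
      by_cases h1 : a ∈ S j <;> by_cases h2 : b ∈ S j <;>
        simp [h1, h2, hYsqE j]
    · by_cases h1 : a ∈ S j <;> by_cases h2 : b ∈ S j' <;>
        simp [h1, h2, hjj, hYYE j j' hjj]
  -- the key covariance computation
  have key : ∫ ω, Zt a ω * Zt b ω
      = p * (1 - p) * ((Finset.univ.filter fun j => a ∈ S j ∧ b ∈ S j).card : ℝ) := by
    have hrep : (fun ω => Zt a ω * Zt b ω)
        = fun ω => ∑ j, ∑ j', (if a ∈ S j then Y j ω else 0) * (if b ∈ S j' then Y j' ω else 0) := by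
      funext ω
      rw [hZtY, hZtY, Finset.sum_mul_sum]
    rw [hrep, integral_finset_sum _ (fun j _ => integrable_finset_sum _ (fun j' _ => hint j j'))]
    have : ∀ j : Fin n, ∫ ω, ∑ j', (if a ∈ S j then Y j ω else 0) * (if b ∈ S j' then Y j' ω else 0)
        = if a ∈ S j ∧ b ∈ S j then p * (1 - p) else 0 := by
      intro j
      rw [integral_finset_sum _ (fun j' _ => hint j j')]
      rw [Finset.sum_congr rfl (fun j' _ => hterm j j')]
      simp
    rw [Finset.sum_congr rfl (fun j _ => this j), ← Finset.sum_filter, Finset.sum_const,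
      nsmul_eq_mul]
    ring
  -- rewrite the LHS
  have hLHS : ∫ ω, (Matrix.diagonal (fun i => Zt i ω) * (X * Xᵀ) *
      Matrix.diagonal (fun i => Zt i ω)) a b
      = (X * Xᵀ) a b * ∫ ω, Zt a ω * Zt b ω := by
    rw [← integral_const_mul]
    refine integral_congr_ae (Filter.Eventually.of_forall fun ω => ?_)
    simp only [Matrix.mul_diagonal, Matrix.diagonal_mul]
    ring
  rw [hLHS, key, hMrhs, hDd]
  have hn0 : (n:ℝ) ≠ 0 := Nat.cast_ne_zero.mpr (by omega)
  have hσ0 : σ ≠ 0 := by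
    intro h
    have := hw a
    rw [h, zero_mul] at this
    exact absurd this (by exact_mod_cast (hdpos a).ne')
  simp only [Matrix.smul_apply, Matrix.add_apply, Matrix.diagonal_mul_diagonal,
    Matrix.mul_diagonal, Matrix.diagonal_mul, Matrix.sub_apply, Matrix.one_apply,
    Matrix.diagonal_apply, smul_eq_mul]
  by_cases hab : a = b
  · subst hab
    have hcard : (Finset.univ.filter fun j => a ∈ S j ∧ a ∈ S j) =
        (Finset.univ.filter fun j => a ∈ S j) := by
      apply Finset.filter_congr; intro j _; simp
    have hXX : (X * Xᵀ) a a = ∑ k, X a k ^ 2 := by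
      rw [Matrix.mul_apply]
      refine Finset.sum_congr rfl fun k _ => ?_
      rw [Matrix.transpose_apply]; ring
    rw [hcard, hdeg a, hXX]
    simp only [if_pos rfl, if_true]
    have hsa : (∑ k, X a k ^ 2) = (d a : ℝ) / σ := by
      rw [hw a]; field_simp
    rw [hsa]
    field_simp
    ring
  · have hpairab := hpair a b hab
    have hcard : ((Finset.univ.filter fun j => a ∈ S j ∧ b ∈ S j).card : ℝ) * n
        = (d a : ℝ) * (d b : ℝ) := by exact_mod_cast hpairab
    simp only [if_neg hab, mul_zero, zero_mul, sub_zero, add_zero, zero_sub, neg_mul, mul_zero]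
    field_simp
    linear_combination p * (1 - p) * (X * Xᵀ) a b * hcard
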